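/- Let K ⊂ ℝ^D be a nonempty compact convex set, let g_1, …, g_r : ℝ^D → ℝ be affine functions with g_i(y) ≥ 0 for all y ∈ K and all i, and let x ∈ K satisfy g_i(x) = 0 for all i = 1, …, r. Then there exists an exposed face F of K (in the sense of Mathlib's IsExposed: F = K or F is the set of maximizers over K of some continuous linear functional) such that x ∈ F and g_i vanishes identically on F for every i = 1, …, r. -/
import Mathlib


open scoped RealInnerProductSpace

/-- if finitely many affine functions `g i` are nonnegative on a
nonempty compact convex set `K` and all vanish at a point `x ∈ K`, then there
is an exposed face `F` of `K` containing `x` on which all the `g i` vanish. -/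
theorem stmt_6 (D r : ℕ) (K : Set (EuclideanSpace ℝ (Fin D)))
    (hKne : K.Nonempty) (hKcpt : IsCompact K) (hKconv : Convex ℝ K)
    (g : Fin r → EuclideanSpace ℝ (Fin D) → ℝ)
    (haff : ∀ i, ∃ (c : ℝ) (l : EuclideanSpace ℝ (Fin D)),
      ∀ y, g i y = c + ⟪l, y⟫)
    (hnonneg : ∀ i, ∀ y ∈ K, 0 ≤ g i y)
    (x : EuclideanSpace ℝ (Fin D)) (hx : x ∈ K)
    (hxzero : ∀ i, g i x = 0) :
    ∃ F : Set (EuclideanSpace ℝ (Fin D)),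
      IsExposed ℝ K F ∧ x ∈ F ∧ ∀ i, ∀ y ∈ F, g i y = 0 := by
  choose c l hg using haff
  set L : EuclideanSpace ℝ (Fin D) := -∑ i, l i with hL
  set φ : EuclideanSpace ℝ (Fin D) →L[ℝ] ℝ := innerSL ℝ L with hφ
  have hsum : ∀ y, (∑ i, g i y) = (∑ i, c i) - φ y := by
    intro y
    have : φ y = -∑ i, ⟪l i, y⟫ := by
      simp [hφ, hL, inner_neg_left, inner_sum, sum_inner]
    simp only [this]
    rw [Finset.sum_congr rfl (fun i _ => hg i y)]
    rw [Finset.sum_add_distrib]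
    ring
  have hsx : (∑ i, g i x) = 0 := by
    rw [Finset.sum_congr rfl (fun i _ => hxzero i)]; simp
  have hmax : ∀ y ∈ K, φ y ≤ φ x := by
    intro y hy
    have h1 : 0 ≤ ∑ i, g i y := Finset.sum_nonneg fun i _ => hnonneg i y hy
    have h2 := hsum y
    have h3 := hsum x
    rw [hsx] at h3
    linarith
  refine ⟨{y ∈ K | ∀ z ∈ K, φ z ≤ φ y}, fun _ => ⟨φ, rfl⟩, ⟨hx, hmax⟩, ?_⟩
  intro i y hy
  have hyx : φ y = φ x := le_antisymm (hmax y hy.1) (hy.2 x hx)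
  have hsy : (∑ i, g i y) = 0 := by
    rw [hsum y, hyx, ← hsum x, hsx]
  have := (Finset.sum_eq_zero_iff_of_nonneg
    (fun j _ => hnonneg j y hy.1)).mp hsy i (Finset.mem_univ i)
  exact this
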